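/- If φ(x) = x^p and ψ(x) = x^r with r > p ≥ 1, then the function ρ(x) = sup_{y ≥ 0} (φ(xy) − ψ(y))/y is equivalent to x ↦ x^{p(r−1)/(r−p)}. -/

import Mathlib

open Filter Topology MeasureTheory
open scoped ENNReal
noncomputable section

/-- A Young function: strictly increasing, convex on `[0,∞)`, vanishing at `0`. -/
def IsYoung (f : ℝ → ℝ) : Prop :=
  StrictMonoOn f (Set.Ici 0) ∧ ConvexOn ℝ (Set.Ici 0) f ∧ f 0 = 0

/-- Legendre transform of a real function (sup over `y ≥ 0`), `ℝ≥0∞`-valued. -/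
def Leg (f : ℝ → ℝ) (x : ℝ) : ℝ≥0∞ :=
  ⨆ y : {y : ℝ // 0 ≤ y}, ENNReal.ofReal (x * y - f y)

/-- Legendre transform of an `ℝ≥0∞`-valued function. -/
def LegE (f : ℝ → ℝ≥0∞) (x : ℝ) : ℝ≥0∞ :=
  ⨆ y : {y : ℝ // 0 ≤ y}, (ENNReal.ofReal (x * y) - f y)

/-- Monotone extension of a real function on `[0,∞)` to `ℝ≥0∞` arguments. -/
def extE (f : ℝ → ℝ) (t : ℝ≥0∞) : ℝ≥0∞ :=
  ⨆ s : {s : ℝ // 0 ≤ s ∧ ENNReal.ofReal s ≤ t}, ENNReal.ofReal (f s)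

/-- Monotone extension of an `ℝ≥0∞`-valued function to `ℝ≥0∞` arguments. -/
def extLT (f : ℝ → ℝ≥0∞) (t : ℝ≥0∞) : ℝ≥0∞ :=
  ⨆ s : {s : ℝ // 0 ≤ s ∧ ENNReal.ofReal s ≤ t}, f s

/-- Generalized (right-continuous) inverse of an `ℝ≥0∞`-valued function. -/
def invE (g : ℝ → ℝ≥0∞) (t : ℝ≥0∞) : ℝ≥0∞ :=
  ⨅ s : {s : ℝ // 0 ≤ s ∧ t ≤ g s}, ENNReal.ofReal s

/-- `ρ(x) = sup_{y ≥ 0} (φ(xy) - ψ(y))/y`. -/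
def rhoSup (φ ψ : ℝ → ℝ) (x : ℝ) : ℝ≥0∞ :=
  ⨆ y : {y : ℝ // 0 ≤ y}, ENNReal.ofReal ((φ (x * y) - ψ y) / y)

/-- `ζ(x) = sup_{y ≥ 0} (φ(xy) - ψ(y)/y)`. -/
def zetaSup (φ ψ : ℝ → ℝ) (x : ℝ) : ℝ≥0∞ :=
  ⨆ y : {y : ℝ // 0 ≤ y}, ENNReal.ofReal (φ (x * y) - ψ y / y)

/-- Domination order on real functions: `f(x) ≤ C₁ g(C₂ x)` for large `x`. -/
def DominR (f g : ℝ → ℝ) : Prop :=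
  ∃ C₁ C₂ x₀ : ℝ, 0 < C₁ ∧ 0 < C₂ ∧ 0 < x₀ ∧ ∀ x ≥ x₀, f x ≤ C₁ * g (C₂ * x)

/-- Equivalence of real functions: mutual domination. -/
def EquivR (f g : ℝ → ℝ) : Prop := DominR f g ∧ DominR g f

/-- Domination order on `ℝ≥0∞`-valued functions. -/
def DominE (f g : ℝ → ℝ≥0∞) : Prop :=
  ∃ C₁ C₂ x₀ : ℝ, 0 < C₁ ∧ 0 < C₂ ∧ 0 < x₀ ∧
    ∀ x ≥ x₀, f x ≤ ENNReal.ofReal C₁ * g (C₂ * x)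

/-- Equivalence of `ℝ≥0∞`-valued functions: mutual domination. -/
def EquivE (f g : ℝ → ℝ≥0∞) : Prop := DominE f g ∧ DominE g f


/-- Key pointwise upper bound. -/
lemma stmt9_upper (p r : ℝ) (hp : 1 ≤ p) (hr : p < r) (x : ℝ) (hx : 0 ≤ x)
    (y : ℝ) (hy : 0 ≤ y) :
    ((x * y) ^ p - y ^ r) / y ≤ x ^ (p * (r - 1) / (r - p)) := by
  have hr1 : (1:ℝ) < r := lt_of_le_of_lt hp hr
  have hq : (0:ℝ) < r - p := by linarith
  have hq' : r - p ≠ 0 := ne_of_gt hq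
  have hr1' : r - 1 ≠ 0 := by intro h; linarith
  have hE : 0 ≤ x ^ (p * (r - 1) / (r - p)) := Real.rpow_nonneg hx _
  rcases hy.eq_or_lt with h | hy'
  · simp [← h, hE]
  · rw [div_le_iff₀ hy']
    have key : x ^ p * y ^ (p - 1) ≤ x ^ (p * (r - 1) / (r - p)) + y ^ (r - 1) := by
      have hw1 : (0:ℝ) ≤ (r - p) / (r - 1) := by
        apply div_nonneg <;> linarith
      have hw2 : (0:ℝ) ≤ (p - 1) / (r - 1) := by
        apply div_nonneg <;> linarith
      have hp1 : (0:ℝ) ≤ x ^ (p * (r - 1) / (r - p)) := hE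
      have hp2 : (0:ℝ) ≤ y ^ (r - 1) := Real.rpow_nonneg hy'.le _
      have hw : (r - p) / (r - 1) + (p - 1) / (r - 1) = 1 := by
        field_simp
        ring
      have h1 : (x ^ (p * (r - 1) / (r - p))) ^ ((r - p) / (r - 1)) = x ^ p := by
        rw [← Real.rpow_mul hx]
        congr 1
        field_simp
      have h2 : (y ^ (r - 1)) ^ ((p - 1) / (r - 1)) = y ^ (p - 1) := by
        rw [← Real.rpow_mul hy'.le]
        congr 1
        field_simp
      calc x ^ p * y ^ (p - 1)
          = (x ^ (p * (r - 1) / (r - p))) ^ ((r - p) / (r - 1)) *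
            (y ^ (r - 1)) ^ ((p - 1) / (r - 1)) := by rw [h1, h2]
        _ ≤ (r - p) / (r - 1) * x ^ (p * (r - 1) / (r - p)) +
            (p - 1) / (r - 1) * y ^ (r - 1) :=
            Real.geom_mean_le_arith_mean2_weighted hw1 hw2 hp1 hp2 hw
        _ ≤ x ^ (p * (r - 1) / (r - p)) + y ^ (r - 1) := by
            have hle1 : (r - p) / (r - 1) ≤ 1 := by
              rw [div_le_one (by linarith)]; linarith
            have hle2 : (p - 1) / (r - 1) ≤ 1 := by
              rw [div_le_one (by linarith)]; linarith
            nlinarith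
    have hxy : (x * y) ^ p = x ^ p * (y ^ (p - 1) * y) := by
      rw [Real.mul_rpow hx hy'.le]
      congr 1
      rw [← Real.rpow_add_one (ne_of_gt hy')]
      ring_nf
    have hyr : y ^ (r - 1) * y = y ^ r := by
      rw [← Real.rpow_add_one (ne_of_gt hy')]
      ring_nf
    have := mul_le_mul_of_nonneg_right key hy
    calc (x * y) ^ p - y ^ r = x ^ p * y ^ (p - 1) * y - y ^ (r - 1) * y := by
          rw [hxy, hyr]; ring
      _ ≤ (x ^ (p * (r - 1) / (r - p)) + y ^ (r - 1)) * y - y ^ (r - 1) * y := by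
          linarith
      _ = x ^ (p * (r - 1) / (r - p)) * y := by ring

/-- Key lower-bound computation at the near-optimal point. -/
lemma stmt9_lower (p r : ℝ) (hp : 1 ≤ p) (hr : p < r) (x : ℝ) (hx : 1 ≤ x) :
    ((x * (x ^ p / 2) ^ ((1:ℝ) / (r - p))) ^ p - ((x ^ p / 2) ^ ((1:ℝ) / (r - p))) ^ r) /
      (x ^ p / 2) ^ ((1:ℝ) / (r - p))
    = (x ^ p / 2) ^ ((r - 1) / (r - p)) := by
  have hq : (0:ℝ) < r - p := by linarith
  have hq' : r - p ≠ 0 := ne_of_gt hq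
  have hx0 : (0:ℝ) < x := by linarith
  have hA : (0:ℝ) < x ^ p / 2 := by positivity
  set A := x ^ p / 2 with hAdef
  have hy : (0:ℝ) < A ^ ((1:ℝ) / (r - p)) := Real.rpow_pos_of_pos hA _
  have hpow : ∀ s : ℝ, (A ^ ((1:ℝ) / (r - p))) ^ s = A ^ (s / (r - p)) := by
    intro s
    rw [← Real.rpow_mul hA.le]
    congr 1
    field_simp
  have hxp : x ^ p = 2 * A := by rw [hAdef]; ring
  have hmul : (x * A ^ ((1:ℝ) / (r - p))) ^ p = 2 * A * A ^ (p / (r - p)) := by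
    rw [Real.mul_rpow hx0.le hy.le, hpow, hxp]
  have hAA : A * A ^ (p / (r - p)) = A ^ (r / (r - p)) := by
    nth_rewrite 1 [← Real.rpow_one A]
    rw [← Real.rpow_add hA]
    congr 1
    field_simp
    ring
  have h2A : 2 * A * A ^ (p / (r - p)) = 2 * A ^ (r / (r - p)) := by
    rw [mul_assoc, hAA]
  rw [hmul, hpow, h2A]
  have : 2 * A ^ (r / (r - p)) - A ^ (r / (r - p)) = A ^ (r / (r - p)) := by ring
  rw [this, ← Real.rpow_sub hA]
  congr 1
  field_simp

/-- If φ(x) = x^p and ψ(x) = x^r with r > p ≥ 1 then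
ρ(x) ≃ x^(p(r−1)/(r−p)). -/
theorem stmt9 (p r : ℝ) (hp : 1 ≤ p) (hr : p < r) :
    EquivE (rhoSup (fun t => t ^ p) (fun t => t ^ r))
      (fun x => ENNReal.ofReal (x ^ (p * (r - 1) / (r - p)))) := by
  have hr1 : (1:ℝ) < r := lt_of_le_of_lt hp hr
  have hq : (0:ℝ) < r - p := by linarith
  constructor
  · -- ρ(x) ≤ 1 * g(1*x)
    refine ⟨1, 1, 1, one_pos, one_pos, one_pos, fun x hx => ?_⟩
    simp only [ENNReal.ofReal_one, one_mul]
    refine iSup_le fun ⟨y, hy⟩ => ?_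
    exact ENNReal.ofReal_le_ofReal
      (stmt9_upper p r hp hr x (by linarith) y hy)
  · -- g(x) ≤ C₁ ρ(1*x)
    refine ⟨2 ^ ((r - 1) / (r - p)), 1, 1,
      Real.rpow_pos_of_pos two_pos _, one_pos, one_pos, fun x hx => ?_⟩
    set y₀ : ℝ := (x ^ p / 2) ^ ((1:ℝ) / (r - p)) with hy₀def
    have hx0 : (0:ℝ) < x := by linarith
    have hA : (0:ℝ) < x ^ p / 2 := by positivity
    have hy₀ : (0:ℝ) ≤ y₀ := (Real.rpow_pos_of_pos hA _).le
    have hval : ((1 * x * y₀) ^ p - y₀ ^ r) / y₀ = (x ^ p / 2) ^ ((r - 1) / (r - p)) := by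
      rw [one_mul]
      exact stmt9_lower p r hp hr x hx
    have hstep : ENNReal.ofReal (((1 * x * y₀) ^ p - y₀ ^ r) / y₀)
        ≤ rhoSup (fun t => t ^ p) (fun t => t ^ r) (1 * x) :=
      le_iSup (fun y : {y : ℝ // 0 ≤ y} =>
        ENNReal.ofReal (((1 * x * (y : ℝ)) ^ p - (y : ℝ) ^ r) / (y : ℝ))) ⟨y₀, hy₀⟩
    refine le_trans (le_of_eq ?_)
      (mul_le_mul_right hstep (ENNReal.ofReal (2 ^ ((r - 1) / (r - p)))))
    rw [hval, ← ENNReal.ofReal_mul (by positivity : (0:ℝ) ≤ 2 ^ ((r-1)/(r-p)))]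
    congr 1
    rw [← Real.mul_rpow two_pos.le hA.le]
    have : (2:ℝ) * (x ^ p / 2) = x ^ p := by ring
    rw [this, ← Real.rpow_mul hx0.le, mul_div_assoc]
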